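/- Let T = T_{n₁,…,n_t} be a 2H-tree with t ≥ 2 in which n₁ = … = n_{t−2} = 0, and let Δ be the maximum degree of T (so Δ = max(t, n_t + 1)). Then Δ ≤ χ'_s(T) ≤ Δ + 1. -/

import Mathlib

/-- A star edge coloring of `G` with `k` colors: a proper edge coloring such that
no path or cycle of length four (four edges) is bi-colored. The walk
`a-b-x-y-z` ranges over all paths of length four (`a,b,x,y,z` distinct) and all
cycles of length four (`z = a` and `a,b,x,y` distinct). -/
def IsStarEdgeColoring {V : Type*} (G : SimpleGraph V) {k : ℕ} (c : Sym2 V → Fin k) : Prop :=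
  (∀ ⦃u v w : V⦄, G.Adj u v → G.Adj u w → v ≠ w → c s(u, v) ≠ c s(u, w)) ∧
  (∀ a b x y z : V, G.Adj a b → G.Adj b x → G.Adj x y → G.Adj y z →
    a ≠ x → a ≠ y → b ≠ y → b ≠ z → x ≠ z →
    ¬(c s(a, b) = c s(x, y) ∧ c s(b, x) = c s(y, z)))

/-- The star chromatic index of `G`: the least `k` admitting a star edge coloring. -/
noncomputable def starChromaticIndex {V : Type*} (G : SimpleGraph V) : ℕ :=
  sInf {k : ℕ | ∃ c : Sym2 V → Fin k, IsStarEdgeColoring G c}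
/-- The 2H-tree `T_{n₁,…,n_t}`: a root (`none`), its `t` neighbours `uᵢ = some ⟨i, none⟩`,
and for each `i`, `n i` further leaves `some ⟨i, some j⟩` adjacent to `uᵢ`. -/
def twoHTree (t : ℕ) (n : Fin t → ℕ) :
    SimpleGraph (Option (Σ i : Fin t, Option (Fin (n i)))) :=
  SimpleGraph.fromRel (fun x y =>
    (x = none ∧ ∃ i : Fin t, y = some ⟨i, none⟩) ∨
    (∃ (i : Fin t) (j : Fin (n i)), x = some ⟨i, none⟩ ∧ y = some ⟨i, some j⟩))

namespace TwoHAux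

abbrev TV (t : ℕ) (n : Fin t → ℕ) := Option (Σ i : Fin t, Option (Fin (n i)))

variable {t : ℕ} {n : Fin t → ℕ}

lemma adjCases {x y : TV t n} (h : (twoHTree t n).Adj x y) :
    (∃ i : Fin t, x = none ∧ y = some ⟨i, none⟩) ∨
    (∃ i : Fin t, y = none ∧ x = some ⟨i, none⟩) ∨
    (∃ (i : Fin t) (j : Fin (n i)), x = some ⟨i, none⟩ ∧ y = some ⟨i, some j⟩) ∨
    (∃ (i : Fin t) (j : Fin (n i)), y = some ⟨i, none⟩ ∧ x = some ⟨i, some j⟩) := by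
  rw [twoHTree, SimpleGraph.fromRel_adj] at h
  obtain ⟨-, h | h⟩ := h
  · rcases h with ⟨h1, i, h2⟩ | ⟨i, j, h1, h2⟩
    · exact Or.inl ⟨i, h1, h2⟩
    · exact Or.inr (Or.inr (Or.inl ⟨i, j, h1, h2⟩))
  · rcases h with ⟨h1, i, h2⟩ | ⟨i, j, h1, h2⟩
    · exact Or.inr (Or.inl ⟨i, h1, h2⟩)
    · exact Or.inr (Or.inr (Or.inr ⟨i, j, h1, h2⟩))

lemma adj_root (i : Fin t) : (twoHTree t n).Adj none (some ⟨i, none⟩) := by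
  rw [twoHTree, SimpleGraph.fromRel_adj]
  exact ⟨by simp, Or.inl (Or.inl ⟨rfl, i, rfl⟩)⟩

lemma adj_leaf (i : Fin t) (j : Fin (n i)) :
    (twoHTree t n).Adj (some ⟨i, none⟩) (some ⟨i, some j⟩) := by
  rw [twoHTree, SimpleGraph.fromRel_adj]
  exact ⟨by simp, Or.inl (Or.inr ⟨i, j, rfl, rfl⟩)⟩

/-- The color of a leaf edge in branch `i`, for the `j`-th leaf. Avoids `t-2` and `t-1`. -/
def fcol (t j : ℕ) : ℕ := if j < t - 2 then j else j + 2

lemma fcol_ne {t j m : ℕ} (h1 : t - 2 ≤ m) (h2 : m < t) : fcol t j ≠ m := by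
  unfold fcol; split <;> omega

lemma fcol_inj {t a b : ℕ} (h : fcol t a = fcol t b) : a = b := by
  unfold fcol at h; split at h <;> split at h <;> omega

lemma fcol_le {t j : ℕ} : fcol t j ≤ j + 2 := by unfold fcol; split <;> omega

/-- Branches below `t-2` are empty. -/
lemma branch_ge (h0 : ∀ i : Fin t, (i : ℕ) < t - 2 → n i = 0) {i : Fin t} (j : Fin (n i)) :
    t - 2 ≤ (i : ℕ) := by
  by_contra h
  have := h0 i (by omega)
  exact absurd j.isLt (by omega)

def colFun (t : ℕ) (n : Fin t → ℕ) : TV t n → TV t n → ℕ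
  | none, some ⟨i, none⟩ => i
  | some ⟨i, none⟩, none => i
  | some ⟨_, none⟩, some ⟨_, some j⟩ => fcol t j
  | some ⟨_, some j⟩, some ⟨_, none⟩ => fcol t j
  | _, _ => 0

lemma colFun_symm (x y : TV t n) : colFun t n x y = colFun t n y x := by
  rcases x with _ | ⟨i, _ | j⟩ <;> rcases y with _ | ⟨i', _ | j'⟩ <;> rfl

lemma spoke_inj {i k : Fin t} (h : (some ⟨i, none⟩ : TV t n) = some ⟨k, none⟩) : i = k := by
  simp at h; exact h.1

lemma leaf_inj {i k : Fin t} {j : Fin (n i)} {l : Fin (n k)}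
    (h : (some ⟨i, some j⟩ : TV t n) = some ⟨k, some l⟩) : i = k := by
  simp at h; exact h.1

lemma leaf_inj2 {i : Fin t} {j l : Fin (n i)}
    (h : (some ⟨i, some j⟩ : TV t n) = some ⟨i, some l⟩) : j = l := by
  simp at h; exact h

lemma spoke_ne_leaf {i k : Fin t} {l : Fin (n k)} :
    (some ⟨i, none⟩ : TV t n) ≠ some ⟨k, some l⟩ := by
  intro h; simp at h; obtain ⟨rfl, h⟩ := h; simp at h

variable (ht : 2 ≤ t) (h0 : ∀ i : Fin t, (i : ℕ) < t - 2 → n i = 0)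
include ht h0

lemma colFun_proper : ∀ ⦃u v w : TV t n⦄, (twoHTree t n).Adj u v → (twoHTree t n).Adj u w →
    v ≠ w → colFun t n u v ≠ colFun t n u w := by
  intro u v w h1 h2 hvw
  rcases adjCases h1 with ⟨i, hu, hv⟩ | ⟨i, hv, hu⟩ | ⟨i, j, hu, hv⟩ | ⟨i, j, hv, hu⟩ <;>
    rcases adjCases h2 with ⟨i', hu', hw⟩ | ⟨i', hw, hu'⟩ | ⟨i', j', hu', hw⟩ | ⟨i', j', hw, hu'⟩ <;>
    subst hu <;> (try subst hv) <;> (try subst hw) <;> simp_all [colFun]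
  all_goals try (intro h; cases Fin.ext h; exact hvw rfl HEq.rfl)
  all_goals obtain ⟨rfl, hh⟩ := hu'
  all_goals try exact hvw HEq.rfl
  all_goals try (simp only [heq_eq_eq, reduceCtorEq] at hh)
  all_goals try exact fun h => fcol_ne (branch_ge h0 j') i.isLt h.symm
  all_goals try exact fcol_ne (branch_ge h0 j) i.isLt
  all_goals (intro h; cases Fin.ext (fcol_inj h); exact hvw HEq.rfl)


lemma colFun_star : ∀ a b x y z : TV t n, (twoHTree t n).Adj a b → (twoHTree t n).Adj b x →
    (twoHTree t n).Adj x y → (twoHTree t n).Adj y z →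
    a ≠ x → a ≠ y → b ≠ y → b ≠ z → x ≠ z →
    ¬(colFun t n a b = colFun t n x y ∧ colFun t n b x = colFun t n y z) := by
  intro a b x y z hab hbx hxy hyz hax hay hby hbz hxz
  rcases adjCases hbx with ⟨i, hb, hx⟩ | ⟨i, hx, hb⟩ | ⟨i, j, hb, hx⟩ | ⟨i, j, hx, hb⟩ <;>
    subst hx <;> subst hb <;>
    rcases adjCases hxy with ⟨k, hx', hy⟩ | ⟨k, hy, hx'⟩ | ⟨k, l, hx', hy⟩ | ⟨k, l, hy, hx'⟩ <;>
    subst hy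
  -- C1D1 : x = spoke i and x = none
  · simp at hx'
  -- C1D2 : b = none = y
  · exact absurd rfl hby
  -- C1D3 : x = spoke i = spoke k, y = leaf(k,l); then z = spoke k = x
  · obtain rfl := spoke_inj hx'
    rcases adjCases hyz with ⟨p, h1, h2⟩ | ⟨p, h1, h2⟩ | ⟨p, p2, h1, h2⟩ | ⟨p, p2, h1, h2⟩
    · simp at h1
    · exact absurd h2.symm spoke_ne_leaf
    · exact absurd h1.symm spoke_ne_leaf
    · obtain rfl := leaf_inj h2
      exact absurd h1.symm hxz
  -- C1D4 : x = spoke i and x = leaf(k,l)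
  · exact absurd hx' spoke_ne_leaf
  -- C2D1 : MAIN. b = spoke i, x = none, y = spoke k
  · rcases adjCases hab with ⟨m, h1, h2⟩ | ⟨m, h1, h2⟩ | ⟨m, m2, h1, h2⟩ | ⟨m, m2, h1, h2⟩
    · exact absurd h1 hax
    · simp at h1
    · exact absurd h2 spoke_ne_leaf
    · obtain rfl := spoke_inj h1
      subst h2
      rcases adjCases hyz with ⟨p, h3, h4⟩ | ⟨p, h3, h4⟩ | ⟨p, p2, h3, h4⟩ | ⟨p, p2, h3, h4⟩
      · simp at h3
      · exact absurd h3.symm hxz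
      · obtain rfl := spoke_inj h3
        subst h4
        rintro ⟨h5, -⟩
        exact fcol_ne (branch_ge h0 p2) k.isLt h5
      · exact absurd h4 spoke_ne_leaf
  -- C2D2 : x = none and x = spoke k
  · simp at hx'
  -- C2D3 : x = none and x = spoke k
  · simp at hx'
  -- C2D4 : x = none and x = leaf(k,l)
  · simp at hx'
  -- C3D1 : x = leaf(i,j) and x = none
  · simp at hx'
  -- C3D2 : x = leaf(i,j) and x = spoke k
  · exact absurd hx'.symm spoke_ne_leaf
  -- C3D3 : x = leaf(i,j) and x = spoke k
  · exact absurd hx'.symm spoke_ne_leaf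
  -- C3D4 : x = leaf(i,j) = leaf(k,l); b = spoke i, y = spoke k
  · obtain rfl := leaf_inj hx'
    exact absurd rfl hby
  -- C4D1 : x = spoke i and x = none
  · simp at hx'
  -- C4D2 : x = spoke i = spoke k, b = leaf(i,j), y = none; a = spoke i = x
  · obtain rfl := spoke_inj hx'
    rcases adjCases hab with ⟨m, h1, h2⟩ | ⟨m, h1, h2⟩ | ⟨m, m2, h1, h2⟩ | ⟨m, m2, h1, h2⟩
    · exact absurd h2.symm spoke_ne_leaf
    · simp at h1
    · obtain rfl := leaf_inj h2.symm
      exact absurd h1 hax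
    · exact absurd h1.symm spoke_ne_leaf
  -- C4D3 : x = spoke i = spoke k, b = leaf(i,j), y = leaf(k,l); a = spoke i = x
  · obtain rfl := spoke_inj hx'
    rcases adjCases hab with ⟨m, h1, h2⟩ | ⟨m, h1, h2⟩ | ⟨m, m2, h1, h2⟩ | ⟨m, m2, h1, h2⟩
    · exact absurd h2.symm spoke_ne_leaf
    · simp at h1
    · obtain rfl := leaf_inj h2.symm
      exact absurd h1 hax
    · exact absurd h1.symm spoke_ne_leaf
  -- C4D4 : x = spoke i and x = leaf(k,l)
  · exact absurd hx' spoke_ne_leaf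


lemma colFun_lt (hn : Monotone n) :
    ∀ x y : TV t n, colFun t n x y < max t (n ⟨t - 1, Nat.sub_lt (by omega) Nat.one_pos⟩ + 1) + 1 := by
  have key : ∀ (i : Fin t) (j : Fin (n i)), fcol t ↑j ≤ max t (n ⟨t - 1, Nat.sub_lt (by omega) Nat.one_pos⟩ + 1) := by
    intro i j
    have h1 : (j : ℕ) < n i := j.isLt
    have h2 : n i ≤ n ⟨t - 1, Nat.sub_lt (by omega) Nat.one_pos⟩ := hn (by
      show (i : ℕ) ≤ t - 1
      have := i.isLt; omega)
    have h3 := @fcol_le t (j : ℕ)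
    have h4 : n ⟨t - 1, Nat.sub_lt (by omega) Nat.one_pos⟩ + 1 ≤ max t (n ⟨t - 1, Nat.sub_lt (by omega) Nat.one_pos⟩ + 1) := le_max_right _ _
    omega
  intro x y
  have hm : t ≤ max t (n ⟨t - 1, Nat.sub_lt (by omega) Nat.one_pos⟩ + 1) := le_max_left _ _
  rcases x with _ | ⟨i, _ | j⟩ <;> rcases y with _ | ⟨i', _ | j'⟩ <;>
    simp only [colFun]
  · omega
  · have := i'.isLt; omega
  · have := key i' j'; omega
  · have := i.isLt; omega
  · omega
  · have := key i' j'; omega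
  · have := key i j; omega
  · have := key i j; omega
  · omega

lemma star_coloring (hn : Monotone n) :
    ∃ c : Sym2 (TV t n) → Fin (max t (n ⟨t - 1, Nat.sub_lt (by omega) Nat.one_pos⟩ + 1) + 1),
      IsStarEdgeColoring (twoHTree t n) c := by
  have hlt := colFun_lt ht h0 hn
  refine ⟨Sym2.lift ⟨fun x y => ⟨colFun t n x y, hlt x y⟩,
    fun x y => by simp only [Fin.mk.injEq]; exact colFun_symm x y⟩, ?_, ?_⟩
  · intro u v w h1 h2 hvw
    simp only [Sym2.lift_mk, ne_eq, Fin.mk.injEq]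
    exact colFun_proper ht h0 h1 h2 hvw
  · intro a b x y z h1 h2 h3 h4 d1 d2 d3 d4 d5
    simp only [Sym2.lift_mk, Fin.mk.injEq]
    exact colFun_star ht h0 a b x y z h1 h2 h3 h4 d1 d2 d3 d4 d5

lemma lower_bound (hn : Monotone n) {k : ℕ} (c : Sym2 (TV t n) → Fin k)
    (hc : IsStarEdgeColoring (twoHTree t n) c) :
    max t (n ⟨t - 1, Nat.sub_lt (by omega) Nat.one_pos⟩ + 1) ≤ k := by
  obtain ⟨hp, -⟩ := hc
  apply max_le
  · have hinj : Function.Injective (fun i : Fin t => c s(none, some ⟨i, none⟩)) := by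
      intro i i' h
      by_contra hne
      exact hp (adj_root i) (adj_root i')
        (fun e => hne (spoke_inj e)) h
    simpa using Fintype.card_le_of_injective _ hinj
  · have hinj : Function.Injective (fun o : Option (Fin (n ⟨t - 1, Nat.sub_lt (by omega) Nat.one_pos⟩)) =>
        Option.elim o (c s(some ⟨⟨t - 1, Nat.sub_lt (by omega) Nat.one_pos⟩, none⟩, none))
          (fun j => c s(some ⟨⟨t - 1, Nat.sub_lt (by omega) Nat.one_pos⟩, none⟩, some ⟨⟨t - 1, Nat.sub_lt (by omega) Nat.one_pos⟩, some j⟩))) := by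
      intro o o' h
      match o, o' with
      | none, none => rfl
      | none, some j =>
        exact absurd h (hp (adj_root _).symm (adj_leaf _ j) (by simp))
      | some j, none =>
        exact absurd h.symm (hp (adj_root _).symm (adj_leaf _ j) (by simp))
      | some j, some j' =>
        by_contra hne
        have hjj : j ≠ j' := by rintro rfl; exact hne rfl
        exact hp (adj_leaf _ j) (adj_leaf _ j')
          (fun e => hjj (leaf_inj2 e)) h
    have := Fintype.card_le_of_injective _ hinj
    simpa using this

end TwoHAux

theorem twoHTree_two_big_branches_bounds (t : ℕ) (ht : 2 ≤ t) (n : Fin t → ℕ)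
    (hn : Monotone n) (h0 : ∀ i : Fin t, (i : ℕ) < t - 2 → n i = 0) :
    max t (n ⟨t - 1, by omega⟩ + 1) ≤ starChromaticIndex (twoHTree t n) ∧
      starChromaticIndex (twoHTree t n) ≤ max t (n ⟨t - 1, by omega⟩ + 1) + 1 := by
  obtain ⟨c, hc⟩ := TwoHAux.star_coloring ht h0 hn
  constructor
  · exact le_csInf ⟨_, c, hc⟩ (fun k hk => by
      obtain ⟨c', hc'⟩ := hk
      exact TwoHAux.lower_bound ht h0 hn c' hc')
  · exact Nat.sInf_le ⟨c, hc⟩
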